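/- arXiv:1009.0943 — 6 statements merged into one kernel-verified Lean document; each statement's English description precedes it below -/
import Mathlib

section
/- Let m ≥ 1 and let p(t) = t^n + a_{n-1}t^{n-1} + ⋯ + a_1 t + a_0 be a monic polynomial with complex coefficients (write a_n = 1). Let R = ℂ[t, t^{-1}, u | u^m = p(t)], i.e. R = ℂ[t,t^{-1}][u]/(u^m − p(t)). Then for every integer i, in Ω¹_R/dR one has ((m+1)n + im)·(class of t^{n+i-1}u dt) = − Σ_{j=0}^{n-1} ((m+1)j + mi) a_j · (class of t^{i+j-1}u dt). -/
noncomputable section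
open Polynomial LaurentPolynomial

/-- The polynomial `X^m − p(t)` over `ℂ[t,t⁻¹]`, where `p(t) = Σ_{j=0}^{n} a_j t^j`. -/
def relPoly (m n : ℕ) (a : ℕ → ℂ) : Polynomial (LaurentPolynomial ℂ) :=
  (X : Polynomial (LaurentPolynomial ℂ)) ^ m -
    Polynomial.C (∑ j ∈ Finset.range (n + 1), LaurentPolynomial.C (a j) * T (j : ℤ))

/-- The ring `R = ℂ[t,t⁻¹][u]/(u^m − p(t))`. -/
abbrev CurrentRing (m n : ℕ) (a : ℕ → ℂ) : Type := AdjoinRoot (relPoly m n a)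

/-- The subspace `dR ⊆ Ω¹_R` of exact differentials. -/
def dR0 (m n : ℕ) (a : ℕ → ℂ) : Submodule ℂ (KaehlerDifferential ℂ (CurrentRing m n a)) :=
  LinearMap.range (KaehlerDifferential.D ℂ (CurrentRing m n a)).toLinearMap

/-- The class of `t^k·u·dt` in `Ω¹_R/dR`. -/
def w0cls (m n : ℕ) (a : ℕ → ℂ) (k : ℤ) :
    KaehlerDifferential ℂ (CurrentRing m n a) ⧸ dR0 m n a :=
  Submodule.Quotient.mk
    ((AdjoinRoot.of (relPoly m n a) (T k) * AdjoinRoot.root (relPoly m n a)) •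
      KaehlerDifferential.D ℂ (CurrentRing m n a) (AdjoinRoot.of (relPoly m n a) (T 1)))

section Aux
variable (m n : ℕ) (a : ℕ → ℂ)

/-- The image of `T k` (i.e. `t^k`) in `R`. -/
def ofT (k : ℤ) : CurrentRing m n a := AdjoinRoot.of _ (T k)

/-- The root `u` in `R`. -/
def uR : CurrentRing m n a := AdjoinRoot.root _

/-- The universal derivation of `R` over `ℂ`. -/
def DD : Derivation ℂ (CurrentRing m n a) (KaehlerDifferential ℂ (CurrentRing m n a)) :=
  KaehlerDifferential.D ℂ (CurrentRing m n a)

lemma ofT_mul (k l : ℤ) : ofT m n a k * ofT m n a l = ofT m n a (k + l) := by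
  rw [ofT, ofT, ofT, ← map_mul, ← T_add]

lemma ofT_zero : ofT m n a 0 = 1 := by rw [ofT, T_zero, map_one]

lemma DofT (k : ℤ) :
    DD m n a (ofT m n a k) = k • (ofT m n a (k - 1) • DD m n a (ofT m n a 1)) := by
  induction k using Int.induction_on with
  | zero => rw [ofT_zero]; simp
  | succ k ih =>
      have e : ofT m n a ((k : ℤ) + 1) = ofT m n a k * ofT m n a 1 := (ofT_mul m n a k 1).symm
      rw [e, Derivation.leibniz, ih, smul_comm (ofT m n a 1), smul_smul, ofT_mul,
        show (1 : ℤ) + ((k : ℤ) - 1) = (k : ℤ) + 1 - 1 by ring, add_smul, one_smul, add_comm,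
        show (k : ℤ) + 1 - 1 = (k : ℤ) by ring]
  | pred k ih =>
      have e : ofT m n a (-(k : ℤ)) = ofT m n a (-(k : ℤ) - 1) * ofT m n a 1 := by
        rw [ofT_mul, sub_add_cancel]
      rw [e, Derivation.leibniz] at ih
      have h1 : ofT m n a 1 • DD m n a (ofT m n a (-(k : ℤ) - 1)) =
          (-(k : ℤ) - 1) • (ofT m n a (-(k : ℤ) - 1) • DD m n a (ofT m n a 1)) := by
        rw [sub_smul, one_smul, ← ih]; abel
      calc DD m n a (ofT m n a (-(k : ℤ) - 1))
          = (ofT m n a (-1) * ofT m n a 1) • DD m n a (ofT m n a (-(k : ℤ) - 1)) := by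
            rw [ofT_mul, show (-1 : ℤ) + 1 = 0 by ring, ofT_zero, one_smul]
        _ = ofT m n a (-1) • (ofT m n a 1 • DD m n a (ofT m n a (-(k : ℤ) - 1))) := by
            rw [mul_smul]
        _ = (-(k : ℤ) - 1) • ((ofT m n a (-1) * ofT m n a (-(k : ℤ) - 1)) •
              DD m n a (ofT m n a 1)) := by rw [h1, smul_comm, mul_smul]
        _ = (-(k : ℤ) - 1) • (ofT m n a (-(k : ℤ) - 1 - 1) • DD m n a (ofT m n a 1)) := by
            rw [ofT_mul, show (-1 : ℤ) + (-(k : ℤ) - 1) = -(k : ℤ) - 1 - 1 by ring]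

/-- The image of `p(t)` in `R`. -/
def pR : CurrentRing m n a :=
  AdjoinRoot.of _ (∑ j ∈ Finset.range (n + 1), LaurentPolynomial.C (a j) * T (j : ℤ))

lemma pR_eq : pR m n a = ∑ j ∈ Finset.range (n + 1), a j • ofT m n a j := by
  rw [pR, map_sum]
  refine Finset.sum_congr rfl fun j _ => ?_
  rw [map_mul, Algebra.smul_def, ofT]
  congr 1

lemma root_pow : uR m n a ^ m = pR m n a := by
  have h := AdjoinRoot.eval₂_root (relPoly m n a)
  rw [relPoly] at h
  simp only [eval₂_sub, eval₂_pow, eval₂_X, Polynomial.eval₂_C, sub_eq_zero] at h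
  exact h

lemma DpR : DD m n a (pR m n a) =
    ∑ j ∈ Finset.range (n + 1),
      ((j : ℂ) * a j) • (ofT m n a ((j : ℤ) - 1) • DD m n a (ofT m n a 1)) := by
  rw [pR_eq]
  rw [show (DD m n a) (∑ j ∈ Finset.range (n + 1), a j • ofT m n a j)
      = (DD m n a).toLinearMap (∑ j ∈ Finset.range (n + 1), a j • ofT m n a j) from rfl,
    map_sum]
  refine Finset.sum_congr rfl fun j _ => ?_
  rw [map_smul]
  show a j • DD m n a (ofT m n a j) = _
  rw [DofT, smul_comm, mul_smul, ← Int.cast_smul_eq_zsmul ℂ ((j : ℕ) : ℤ)]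
  norm_num

lemma DofT' (k : ℤ) :
    DD m n a (ofT m n a k) = (k : ℂ) • (ofT m n a (k - 1) • DD m n a (ofT m n a 1)) := by
  rw [DofT, Int.cast_smul_eq_zsmul]

lemma hDu :
    (m : ℂ) • (uR m n a ^ (m - 1) • DD m n a (uR m n a)) = DD m n a (pR m n a) := by
  rw [← root_pow, Derivation.leibniz_pow, Nat.cast_smul_eq_nsmul]

lemma hmid (hm : 1 ≤ m) (i : ℤ) :
    (m : ℂ) • (pR m n a • (ofT m n a i • DD m n a (uR m n a))) =
      (ofT m n a i * uR m n a) • DD m n a (pR m n a) := by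
  have hu : pR m n a = uR m n a * uR m n a ^ (m - 1) := by
    rw [← root_pow, ← pow_succ']
    congr 1
    omega
  conv_lhs => rw [hu]
  rw [← hDu]
  module

lemma key (hm : 1 ≤ m) (i : ℤ) :
    DD m n a ((m : ℂ) • (ofT m n a i * uR m n a * pR m n a)) =
      ∑ j ∈ Finset.range (n + 1),
        ((((m : ℂ) + 1) * (j : ℂ) + (m : ℂ) * (i : ℂ)) * a j) •
          ((ofT m n a (i + (j : ℤ) - 1) * uR m n a) • DD m n a (ofT m n a 1)) := by
  have step1 : (ofT m n a i * uR m n a) • DD m n a (pR m n a)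
      = ∑ j ∈ Finset.range (n + 1), ((j : ℂ) * a j) •
          ((ofT m n a (i + (j : ℤ) - 1) * uR m n a) • DD m n a (ofT m n a 1)) := by
    rw [DpR, Finset.smul_sum]
    refine Finset.sum_congr rfl fun j _ => ?_
    rw [smul_comm, smul_smul, mul_right_comm, ofT_mul,
      show i + ((j : ℤ) - 1) = i + (j : ℤ) - 1 by ring]
  have step2 : (pR m n a * (uR m n a * ofT m n a (i - 1)))
      = ∑ j ∈ Finset.range (n + 1), a j • (ofT m n a (i + (j : ℤ) - 1) * uR m n a) := by
    rw [pR_eq, Finset.sum_mul]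
    refine Finset.sum_congr rfl fun j _ => ?_
    rw [smul_mul_assoc]
    congr 1
    rw [show ofT m n a j * (uR m n a * ofT m n a (i - 1))
        = ofT m n a j * ofT m n a (i - 1) * uR m n a by ring, ofT_mul,
      show (j : ℤ) + (i - 1) = i + (j : ℤ) - 1 by ring]
  rw [Derivation.map_smul, Derivation.leibniz, Derivation.leibniz, DofT' m n a i]
  have main :
      (m : ℂ) • ((ofT m n a i * uR m n a) • DD m n a (pR m n a)
          + pR m n a • (ofT m n a i • DD m n a (uR m n a)
              + uR m n a • ((i : ℂ) • (ofT m n a (i - 1) • DD m n a (ofT m n a 1)))))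
        = ((m : ℂ) + 1) • ((ofT m n a i * uR m n a) • DD m n a (pR m n a))
          + ((m : ℂ) * (i : ℂ)) •
              ((pR m n a * (uR m n a * ofT m n a (i - 1))) • DD m n a (ofT m n a 1)) := by
    linear_combination (norm := module) hmid m n a hm i
  rw [main, step1, step2, Finset.sum_smul, Finset.smul_sum, Finset.smul_sum,
    ← Finset.sum_add_distrib]
  refine Finset.sum_congr rfl fun j _ => ?_
  match_scalars <;> simp [Algebra.smul_def] <;> ring

end Aux

/-- Let `m ≥ 1` and `p(t) = t^n + a_{n-1}t^{n-1} + ⋯ + a_0` monic (`a_n = 1`).  In `Ω¹_R/dR`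
for `R = ℂ[t,t⁻¹][u]/(u^m − p(t))` one has, for every `i : ℤ`,
`((m+1)n + im)·(t^{n+i−1}u dt) = − Σ_{j=0}^{n−1} ((m+1)j + mi)·a_j·(t^{i+j−1}u dt)`. -/
theorem stmt0 (m n : ℕ) (hm : 1 ≤ m) (hn : 1 ≤ n) (a : ℕ → ℂ) (han : a n = 1) (i : ℤ) :
    (((m : ℂ) + 1) * (n : ℂ) + (i : ℂ) * (m : ℂ)) • w0cls m n a ((n : ℤ) + i - 1) =
      - ∑ j ∈ Finset.range n,
          ((((m : ℂ) + 1) * (j : ℂ) + (m : ℂ) * (i : ℂ)) * a j) • w0cls m n a (i + (j : ℤ) - 1) := by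
  have hq : ∑ j ∈ Finset.range (n + 1),
      ((((m : ℂ) + 1) * (j : ℂ) + (m : ℂ) * (i : ℂ)) * a j) • w0cls m n a (i + (j : ℤ) - 1)
      = 0 := by
    have hk := key m n a hm i
    simp only [ofT, uR, DD] at hk
    have hw : ∀ j : ℕ, w0cls m n a (i + (j : ℤ) - 1) = (dR0 m n a).mkQ
        ((AdjoinRoot.of (relPoly m n a) (T (i + (j : ℤ) - 1)) * AdjoinRoot.root (relPoly m n a)) •
          KaehlerDifferential.D ℂ (CurrentRing m n a) (AdjoinRoot.of (relPoly m n a) (T 1))) :=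
      fun j => rfl
    simp only [hw, ← map_smul, ← map_sum, ← hk]
    rw [Submodule.mkQ_apply, Submodule.Quotient.mk_eq_zero]
    exact LinearMap.mem_range.mpr ⟨_, rfl⟩
  rw [Finset.sum_range_succ, han, mul_one] at hq
  rw [show (n : ℤ) + i - 1 = i + (n : ℤ) - 1 by ring,
    show ((m : ℂ) + 1) * (n : ℂ) + (i : ℂ) * (m : ℂ)
      = ((m : ℂ) + 1) * (n : ℂ) + (m : ℂ) * (i : ℂ) by ring]
  linear_combination (norm := module) hq
end
end

section
/- Let c ∈ ℂ with c² ≠ 1. Define (P_{−1,k})_{k ≥ −4} by the initial values P_{−1,−4} = P_{−1,−3} = P_{−1,−2} = 0, P_{−1,−1} = 1 and the recursion (6+2k)P_{−1,k} = 4kc·P_{−1,k−2} − 2(k−3)·P_{−1,k−4} for k ≥ 0, and let P(z) = Σ_{k ≥ 0} P_{−1,k−4} z^k ∈ ℂ[[z]]. Let S ∈ ℂ[[z]] be the unique formal power series with constant term 1 satisfying S² = 1 − 2cz² + z⁴. Then (c² − 1)·P(z) = cz − z³ − cz·S(z). -/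
noncomputable section
open PowerSeries

/-- Let `c² ≠ 1` and let `(P_{−1,k})_{k ≥ −4}` have initial values
`P_{−1,−4} = P_{−1,−3} = P_{−1,−2} = 0`, `P_{−1,−1} = 1` and satisfy the recursion
`(6+2k)P_k = 4kc·P_{k−2} − 2(k−3)·P_{k−4}` for `k ≥ 0`.  If `S ∈ ℂ⟦z⟧` is the power series
with constant term `1` and `S² = 1 − 2cz² + z⁴`, then the generating series
`P(z) = Σ_{k ≥ 0} P_{−1,k−4} z^k` satisfies `(c² − 1)·P(z) = cz − z³ − cz·S(z)`. -/
theorem stmt13 (c : ℂ) (hc : c ^ 2 ≠ 1) (P : ℤ → ℂ)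
    (h4 : P (-4) = 0) (h3 : P (-3) = 0) (h2 : P (-2) = 0) (h1 : P (-1) = 1)
    (hrec : ∀ k : ℤ, 0 ≤ k →
      ((6 : ℂ) + 2 * (k : ℂ)) * P k = 4 * (k : ℂ) * c * P (k - 2) - 2 * ((k : ℂ) - 3) * P (k - 4))
    (S : PowerSeries ℂ) (hS0 : PowerSeries.constantCoeff S = 1)
    (hS : S ^ 2 = 1 - PowerSeries.C (2 * c) * X ^ 2 + X ^ 4) :
    PowerSeries.C (c ^ 2 - 1) * PowerSeries.mk (fun k => P ((k : ℤ) - 4)) =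
      PowerSeries.C c * X - X ^ 3 - PowerSeries.C c * X * S := by
  -- derivative identity 2 S S' = f'
  have hder : 2 * S * (d⁄dX ℂ S) = - C (4*c) * X + 4 * X ^ 3 := by
    have h := congrArg (d⁄dX ℂ) hS
    simp only [Derivation.leibniz, Derivation.leibniz_pow, pow_two, smul_eq_mul, map_add, map_sub,
      Derivation.map_one_eq_zero, derivative_X, derivative_C, nsmul_eq_mul] at h
    have hC : (C (R := ℂ)) (4 * c) = 2 * C (2 * c) := by
      rw [show (4:ℂ)*c = 2*(2*c) by ring, map_mul, map_ofNat]
    rw [hC]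
    push_cast at h
    linear_combination h
  have hkey : 2 * ((1:ℂ⟦X⟧) - C (2*c)*X^2 + X^4) * (d⁄dX ℂ S)
      = (- C (4*c) * X + 4*X^3) * S := by
    rw [← hS]
    linear_combination S * hder
  -- coefficient recursion for S
  have Srec : ∀ n : ℕ, ((n:ℂ)+4) * coeff (n+4) S
      = 2*c*((n:ℂ)+1) * coeff (n+2) S + (2-(n:ℂ)) * coeff n S := by
    set S' := d⁄dX ℂ S with hS'def
    set a : ℂ := -(4*c) with ha
    have e0 : (C (R := ℂ)) (2:ℂ) = 2 := map_ofNat _ 2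
    have e4 : (C (R := ℂ)) (4:ℂ) = 4 := map_ofNat _ 4
    have e1 : (C (R := ℂ)) a = (-2) * C (2*c) := by
      rw [ha, show (-(4*c)) = (-2:ℂ)*(2*c) by ring, map_mul, map_neg, map_ofNat]
    have e2 : (C (R := ℂ)) a = - C (4*c) := by rw [ha, map_neg]
    have hL : (2 * ((1:ℂ⟦X⟧) - C (2*c)*X^2 + X^4) * S')
        = C 2 * S' + X^2 * (C a * S') + X^4 * (C 2 * S') := by
      rw [e1, e0]; ring
    have hR : ((- C (4*c) * X + 4*X^3) * S) = X * (C a * S) + X^3 * (C 4 * S) := by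
      rw [e2, e4]; ring
    rw [hL, hR] at hkey
    have hkey' : ∀ m : ℕ, coeff m (C 2 * S' + X^2 * (C a * S') + X^4 * (C 2 * S'))
        = coeff m (X * (C a * S) + X^3 * (C 4 * S)) := fun m => by rw [hkey]
    intro n
    rcases n with _ | m
    · have h := hkey' 3
      simp [coeff_X_pow_mul', coeff_C_mul, coeff_derivative, hS'def] at h
      norm_num
      linear_combination h / 2
    · have h := hkey' (m+4)
      simp [coeff_X_pow_mul', coeff_C_mul, coeff_derivative, hS'def] at h
      push_cast at h ⊢
      simp only [show m+4+1=m+5 from rfl, show m+2+1=m+3 from rfl] at h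
      simp only [show m+1+4=m+5 from rfl, show m+1+2=m+3 from rfl]
      linear_combination h / 2
  -- small coefficients of S
  have hcoe : ∀ n : ℕ, coeff n (S^2) = coeff n (1 - PowerSeries.C (2 * c) * X ^ 2 + X ^ 4) :=
    fun n => by rw [hS]
  have s0 : coeff 0 S = 1 := by rwa [coeff_zero_eq_constantCoeff]
  have s1 : coeff 1 S = 0 := by
    have h := hcoe 1
    simp [pow_two, coeff_mul, Finset.Nat.sum_antidiagonal_eq_sum_range_succ_mk,
      Finset.sum_range_succ, s0, coeff_C_mul, coeff_one, coeff_X, coeff_X_pow] at h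
    exact h
  have s2 : coeff 2 S = -c := by
    have h := hcoe 2
    simp [pow_two, coeff_mul, Finset.Nat.sum_antidiagonal_eq_sum_range_succ_mk,
      Finset.sum_range_succ, s0, s1, coeff_C_mul, coeff_one, coeff_X, coeff_X_pow] at h
    linear_combination h / 2
  have s3 : coeff 3 S = 0 := by
    have h := hcoe 3
    simp [pow_two, coeff_mul, Finset.Nat.sum_antidiagonal_eq_sum_range_succ_mk,
      Finset.sum_range_succ, s0, s1, s2, coeff_C_mul, coeff_one, coeff_X, coeff_X_pow] at h
    exact h
  have s4 : coeff 4 S = (1 - c^2)/2 := by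
    have h := Srec 0
    norm_num at h
    rw [hS0] at h
    rw [s2] at h
    linear_combination h / 4
  have s5 : coeff 5 S = 0 := by
    have h := Srec 1
    norm_num at h
    simp only [s1, s3] at h
    linear_combination h / 5
  have s6 : coeff 6 S = c * (1 - c^2)/2 := by
    have h := Srec 2
    norm_num at h
    simp only [s2, s4] at h
    linear_combination h / 6
  -- small values of P
  have p0 : P 0 = 0 := by
    have h := hrec 0 (by norm_num)
    norm_num at h
    rw [h4] at h
    exact h
  have p1 : P 1 = c / 2 := by
    have h := hrec 1 (by norm_num)
    norm_num at h
    rw [h1, h3] at h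
    linear_combination h / 8
  have p2 : P 2 = 0 := by
    have h := hrec 2 (by norm_num)
    norm_num at h
    rw [h2, p0] at h
    linear_combination h / 10
  have p3 : P 3 = c^2 / 2 := by
    have h := hrec 3 (by norm_num)
    norm_num at h
    rw [p1] at h
    linear_combination h / 12
  -- window induction
  have key : ∀ n : ℕ, ((c^2-1) * P n = -c * coeff (n+3) S)
      ∧ ((c^2-1) * P (n+1) = -c * coeff (n+4) S)
      ∧ ((c^2-1) * P (n+2) = -c * coeff (n+5) S)
      ∧ ((c^2-1) * P (n+3) = -c * coeff (n+6) S) := by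
    intro n
    induction n with
    | zero =>
      refine ⟨?_, ?_, ?_, ?_⟩
      · push_cast; rw [p0, s3]; ring
      · push_cast; rw [p1, s4]; ring
      · push_cast; rw [p2, s5]; ring
      · push_cast; rw [p3, s6]; ring
    | succ m ih =>
      obtain ⟨q0, q1, q2, q3⟩ := ih
      refine ⟨?_, ?_, ?_, ?_⟩
      · simp only [show m+1+3 = m+4 from rfl]
        push_cast at q1 ⊢
        exact q1
      · simp only [show m+1+1 = m+2 from rfl, show m+1+4 = m+5 from rfl]
        push_cast at q2 ⊢
        exact q2
      · simp only [show m+1+2 = m+3 from rfl, show m+1+5 = m+6 from rfl]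
        push_cast at q3 ⊢
        exact q3
      · -- new one : (c^2-1) P(m+4) = -c * S_{m+7}
        have hr := hrec ((m:ℤ)+4) (by positivity)
        rw [show ((m:ℤ)+4)-2 = (m:ℤ)+2 by ring, show ((m:ℤ)+4)-4 = (m:ℤ) by ring] at hr
        push_cast at hr
        have hsr := Srec (m+3)
        simp only [show m+3+4 = m+7 from rfl, show m+3+2 = m+5 from rfl] at hsr
        push_cast at hsr
        push_cast at q0 q2 ⊢
        simp only [show m+1+3 = m+4 from rfl, show m+1+6 = m+7 from rfl] at *
        rw [show ((m:ℤ)+1+3) = (m:ℤ)+4 by ring]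
        have hne : (2:ℂ)*((m:ℂ)+7) ≠ 0 := by
          have h7 : (((m+7:ℕ)):ℂ) ≠ 0 := Nat.cast_ne_zero.mpr (by omega)
          push_cast at h7
          simpa using h7
        apply mul_left_cancel₀ hne
        linear_combination (c^2-1)*hr + 4*((m:ℂ)+4)*c*q2 - 2*((m:ℂ)+1)*q0 + 2*c*hsr
  -- conclude
  ext n
  rw [coeff_C_mul, coeff_mk]
  rcases n with _ | _ | _ | _ | m
  · norm_num [coeff_zero_X_mul, mul_assoc, h4]
  · simp [mul_assoc, coeff_succ_X_mul, coeff_C_mul, coeff_X, coeff_X_pow, hS0, s0]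
    norm_num [h3]
  · simp [mul_assoc, coeff_succ_X_mul, coeff_C_mul, coeff_X, coeff_X_pow, s1]
    norm_num [h2]
  · simp [mul_assoc, coeff_succ_X_mul, coeff_C_mul, coeff_X, coeff_X_pow, s2]
    norm_num [h1]
    ring
  · have q := (key m).1
    have e : ((m+1+1+1+1 : ℕ) : ℤ) - 4 = (m : ℤ) := by push_cast; ring
    rw [e]
    simp [mul_assoc, coeff_succ_X_mul, coeff_C_mul, coeff_X, coeff_X_pow]
    linear_combination q
end
end

section
/- Let c ∈ ℂ with c² ≠ 1. Define (P_{−3,k})_{k ≥ −4} by the initial values P_{−3,−4} = 0, P_{−3,−3} = 1, P_{−3,−2} = 0, P_{−3,−1} = 0 and the recursion (6+2k)P_{−3,k} = 4kc·P_{−3,k−2} − 2(k−3)·P_{−3,k−4} for k ≥ 0, and let P(z) = Σ_{k ≥ 0} P_{−3,k−4} z^k ∈ ℂ[[z]]. Let S ∈ ℂ[[z]] be the unique formal power series with constant term 1 satisfying S² = 1 − 2cz² + z⁴. Then (c² − 1)·P(z) = c²z − cz³ − z·S(z). -/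
noncomputable section
open PowerSeries

/-- Let `c² ≠ 1` and let `(P_{−3,k})_{k ≥ −4}` have initial values
`P_{−3,−4} = 0`, `P_{−3,−3} = 1`, `P_{−3,−2} = P_{−3,−1} = 0` and satisfy the recursion
`(6+2k)P_k = 4kc·P_{k−2} − 2(k−3)·P_{k−4}` for `k ≥ 0`.  If `S ∈ ℂ⟦z⟧` is the power series
with constant term `1` and `S² = 1 − 2cz² + z⁴`, then the generating series
`P(z) = Σ_{k ≥ 0} P_{−3,k−4} z^k` satisfies `(c² − 1)·P(z) = c²z − cz³ − z·S(z)`. -/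
theorem stmt14 (c : ℂ) (hc : c ^ 2 ≠ 1) (P : ℤ → ℂ)
    (h4 : P (-4) = 0) (h3 : P (-3) = 1) (h2 : P (-2) = 0) (h1 : P (-1) = 0)
    (hrec : ∀ k : ℤ, 0 ≤ k →
      ((6 : ℂ) + 2 * (k : ℂ)) * P k = 4 * (k : ℂ) * c * P (k - 2) - 2 * ((k : ℂ) - 3) * P (k - 4))
    (S : PowerSeries ℂ) (hS0 : PowerSeries.constantCoeff S = 1)
    (hS : S ^ 2 = 1 - PowerSeries.C (2 * c) * X ^ 2 + X ^ 4) :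
    PowerSeries.C (c ^ 2 - 1) * PowerSeries.mk (fun k => P ((k : ℤ) - 4)) =
      PowerSeries.C (c ^ 2) * X - PowerSeries.C c * X ^ 3 - X * S := by
  have hs0 : coeff 0 S = 1 := by simpa [coeff_zero_eq_constantCoeff] using hS0
  have hcoef : ∀ n : ℕ, ∑ i ∈ Finset.range (n+1), coeff i S * coeff (n - i) S
      = coeff n (1 - PowerSeries.C (2 * c) * X ^ 2 + X ^ 4) := by
    intro n
    rw [← hS, pow_two, coeff_mul, Finset.Nat.sum_antidiagonal_eq_sum_range_succ_mk]
  have hs1 : coeff 1 S = 0 := by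
    have := hcoef 1
    simp [Finset.sum_range_succ, coeff_one, coeff_X_pow, mul_assoc, coeff_C_mul, hs0] at this
    exact this
  have hs2 : coeff 2 S = -c := by
    have := hcoef 2
    simp [Finset.sum_range_succ, coeff_one, coeff_X_pow, mul_assoc, coeff_C_mul, hs0, hs1] at this
    linear_combination this / 2
  have hs3 : coeff 3 S = 0 := by
    have := hcoef 3
    simp [Finset.sum_range_succ, coeff_one, coeff_X_pow, mul_assoc, coeff_C_mul, hs0, hs1, hs2] at this
    exact this
  have hs4 : coeff 4 S = (1 - c^2)/2 := by
    have := hcoef 4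
    simp [Finset.sum_range_succ, coeff_one, coeff_X_pow, mul_assoc, coeff_C_mul, hs0, hs1, hs2, hs3] at this
    linear_combination this / 2
  -- the ODE `2·W·S' = S·W'` where `W = 1 - 2cX² + X⁴`
  have hd : (d⁄dX ℂ) (S^2) = d⁄dX ℂ (1 - C (2*c) * X^2 + X^4) := by rw [hS]
  simp only [Derivation.leibniz_pow, map_add, map_sub, Derivation.map_one_eq_zero,
    Derivation.leibniz, derivative_X, derivative_C, smul_eq_mul] at hd
  ring_nf at hd
  rw [show (c*2 : ℂ) = 2*c from mul_comm c 2] at hd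
  have hode : C 2 * d⁄dX ℂ S - C (4*c) * (X^2 * d⁄dX ℂ S) + C 2 * (X^4 * d⁄dX ℂ S)
      = -(C (4*c) * (X * S)) + C 4 * (X^3 * S) := by
    have e2 : (C 2 : PowerSeries ℂ) = 2 := map_ofNat _ 2
    have e4 : (C 4 : PowerSeries ℂ) = 4 := map_ofNat _ 4
    have e4c : (C (4*c) : PowerSeries ℂ) = 2 * C (2*c) := by
      rw [show (4*c : ℂ) = 2*(2*c) by ring, map_mul, e2]
    rw [e2, e4, e4c]
    linear_combination S * hd - 2 * (d⁄dX ℂ S) * hS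
  -- the linear recursion for the coefficients of S
  have hsrec : ∀ i : ℕ, 2*((i:ℂ)+5) * coeff (i+5) S + (2*(i:ℂ)-2) * coeff (i+1) S
      = 4*c*((i:ℂ)+2) * coeff (i+3) S := by
    intro i
    have h := congrArg (coeff (i+4)) hode
    simp only [map_add, map_sub, map_neg, coeff_C_mul] at h
    rw [show coeff (i+4) (X^2 * d⁄dX ℂ S) = coeff (i+2) (d⁄dX ℂ S) from
          coeff_X_pow_mul _ 2 (i+2),
        show coeff (i+4) (X^4 * d⁄dX ℂ S) = coeff i (d⁄dX ℂ S) from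
          coeff_X_pow_mul _ 4 i,
        show coeff (i+4) (X * S) = coeff (i+3) S from coeff_succ_X_mul (i+3) _,
        show coeff (i+4) (X^3 * S) = coeff (i+1) S from coeff_X_pow_mul _ 3 (i+1)] at h
    simp only [coeff_derivative] at h
    simp only [show i+4+1 = i+5 from rfl, show i+2+1 = i+3 from rfl] at h
    push_cast at h
    linear_combination h
  -- coefficients of the right-hand side
  have hb : ∀ m : ℕ, coeff (m+4) (C (c^2) * X - C c * X^3 - X * S)
      = -coeff (m+3) S := by
    intro m
    simp only [map_sub, coeff_C_mul]
    rw [coeff_X, if_neg (by omega), coeff_X_pow, if_neg (by omega),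
      show coeff (m+4) (X * S) = coeff (m+3) S from coeff_succ_X_mul (m+3) _]
    ring
  have hb0 : coeff 0 (C (c^2) * X - C c * X^3 - X * S) = 0 := by
    simp [coeff_C_mul, coeff_X, coeff_X_pow]
  have hb1 : coeff 1 (C (c^2) * X - C c * X^3 - X * S) = c^2 - 1 := by
    simp only [map_sub, coeff_C_mul]
    rw [coeff_X, if_pos rfl, coeff_X_pow, if_neg (by omega),
      show coeff 1 (X * S) = coeff 0 S from coeff_succ_X_mul 0 _, hs0]
    ring
  have hb2 : coeff 2 (C (c^2) * X - C c * X^3 - X * S) = 0 := by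
    simp only [map_sub, coeff_C_mul]
    rw [coeff_X, if_neg (by omega), coeff_X_pow, if_neg (by omega),
      show coeff 2 (X * S) = coeff 1 S from coeff_succ_X_mul 1 _, hs1]
    ring
  have hb3 : coeff 3 (C (c^2) * X - C c * X^3 - X * S) = 0 := by
    simp only [map_sub, coeff_C_mul]
    rw [coeff_X, if_neg (by omega), coeff_X_pow, if_pos rfl,
      show coeff 3 (X * S) = coeff 2 S from coeff_succ_X_mul 2 _, hs2]
    ring
  -- recursion for the coefficients of the right-hand side
  have hbrec : ∀ j : ℕ, (2*(j:ℂ)+6) * coeff (j+4) (C (c^2) * X - C c * X^3 - X * S)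
      = 4*(j:ℂ)*c * coeff (j+2) (C (c^2) * X - C c * X^3 - X * S)
        - 2*((j:ℂ)-3) * coeff j (C (c^2) * X - C c * X^3 - X * S) := by
    intro j
    rcases Nat.lt_or_ge j 4 with hj | hj
    · interval_cases j
      · rw [hb 0, hb0, hb2, hs3]; norm_num
      · rw [hb 1, hb1, hb3, hs4]; push_cast; ring
      · have h5 : coeff 5 S = 0 := by
          have := hsrec 0
          rw [hs1, hs3] at this
          push_cast at this
          linear_combination this / 10
        rw [hb 2, show (2:ℕ)+2 = 0+4 from rfl, hb 0, hb2, hs3, h5]; norm_num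
      · have h6 : coeff 6 S = 6*c*(1-c^2)/12 := by
          have := hsrec 1
          rw [hs2, hs4] at this
          push_cast at this
          linear_combination this / 12
        rw [hb 3, show (3:ℕ)+2 = 1+4 from rfl, hb 1, hb3, hs4, h6]; push_cast; ring
    · obtain ⟨i, rfl⟩ : ∃ i, j = i + 4 := ⟨j - 4, by omega⟩
      rw [show i+4+4 = i+4+4 from rfl, hb (i+4),
        show i+4+2 = (i+2)+4 from rfl, hb (i+2),
        show i+4 = i+4 from rfl, hb i]
      have h := hsrec (i+2)
      rw [show i+2+5 = i+4+3 from rfl, show i+2+1 = i+3 from rfl,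
        show i+2+3 = i+2+3 from rfl] at h
      push_cast at h ⊢
      linear_combination -h
  -- coefficients of the left-hand side
  have hL : ∀ m : ℕ, coeff m (C (c^2-1) * mk fun k => P ((k:ℤ)-4))
      = (c^2-1) * P ((m:ℤ)-4) := by
    intro m
    rw [coeff_C_mul, coeff_mk]
  -- main induction
  ext n
  induction n using Nat.strong_induction_on with
  | _ n ih =>
    rcases Nat.lt_or_ge n 4 with hn | hn
    · interval_cases n
      · rw [hL 0, hb0]; norm_num [h4]
      · rw [hL 1, hb1]; norm_num [h3]
      · rw [hL 2, hb2]; norm_num [h2]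
      · rw [hL 3, hb3]; norm_num [h1]
    · obtain ⟨j, rfl⟩ : ∃ j, n = j + 4 := ⟨n - 4, by omega⟩
      have hr := hrec (j:ℤ) (Int.natCast_nonneg j)
      push_cast at hr
      have e1 : coeff (j+4) (C (c^2-1) * mk fun k => P ((k:ℤ)-4))
          = (c^2-1) * P (j:ℤ) := by
        rw [hL (j+4), show (((j+4:ℕ)):ℤ)-4 = (j:ℤ) by push_cast; ring]
      have e2 : coeff (j+2) (C (c^2-1) * mk fun k => P ((k:ℤ)-4))
          = (c^2-1) * P ((j:ℤ)-2) := by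
        rw [hL (j+2), show (((j+2:ℕ)):ℤ)-4 = (j:ℤ)-2 by push_cast; ring]
      have e3 : coeff j (C (c^2-1) * mk fun k => P ((k:ℤ)-4))
          = (c^2-1) * P ((j:ℤ)-4) := hL j
      have ih2 := ih (j+2) (by omega)
      have ih3 := ih j (by omega)
      have hbr := hbrec j
      have hne : (2*(j:ℂ)+6) ≠ 0 := by
        have : ((2*j+6 : ℕ) : ℂ) ≠ 0 := Nat.cast_ne_zero.mpr (by omega)
        push_cast at this
        exact this
      apply mul_left_cancel₀ hne
      linear_combination (2*(j:ℂ)+6)*e1 + (c^2-1)*hr - 4*(j:ℂ)*c*e2 + 2*((j:ℂ)-3)*e3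
        + 4*(j:ℂ)*c*ih2 - 2*((j:ℂ)-3)*ih3 - hbr
end
end

section
/- Let c ∈ ℂ. Let (P_{−1,k})_{k ≥ −4} and (P_{−3,k})_{k ≥ −4} be the sequences each satisfying the recursion (6+2k)P_k = 4kc·P_{k−2} − 2(k−3)·P_{k−4} for k ≥ 0, with initial values P_{−1,−4} = P_{−1,−3} = P_{−1,−2} = 0, P_{−1,−1} = 1 and P_{−3,−4} = 0, P_{−3,−3} = 1, P_{−3,−2} = P_{−3,−1} = 0 respectively. Then P_{−1,2n−3} = c·P_{−3,2n−3} for every integer n ≥ 2, and moreover P_{−1,2m} = 0 and P_{−3,2m} = 0 for every integer m ≥ 0. -/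
private lemma aux_even (c : ℂ) (P : ℤ → ℂ) (h4 : P (-4) = 0) (h2 : P (-2) = 0)
    (hrec : ∀ k : ℤ, 0 ≤ k →
      ((6 : ℂ) + 2 * (k : ℂ)) * P k = 4 * (k : ℂ) * c * P (k - 2) - 2 * ((k : ℂ) - 3) * P (k - 4)) :
    ∀ n : ℕ, P (2 * n) = 0 := by
  have key : ∀ n : ℕ, P (2 * n - 2) = 0 ∧ P (2 * n) = 0 := by
    intro n
    induction n with
    | zero =>
      have h0 := hrec 0 le_rfl
      norm_num [h4, h2] at h0
      refine ⟨by norm_num [h2], by norm_num [h0]⟩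
    | succ n ih =>
      obtain ⟨ih1, ih2⟩ := ih
      have h := hrec (2 * (n + 1)) (by positivity)
      have e2 : (2 * ((n : ℤ) + 1) - 2) = 2 * n := by ring
      have e4 : (2 * ((n : ℤ) + 1) - 4) = 2 * n - 2 := by ring
      push_cast at h
      rw [e2, e4, ih1, ih2] at h
      have hne : ((6 : ℂ) + 2 * (2 * ((n : ℂ) + 1))) ≠ 0 := by
        intro hcon
        have h' : ((4 * n + 10 : ℕ) : ℂ) = 0 := by push_cast; linear_combination hcon
        rw [Nat.cast_eq_zero] at h'
        omega
      have hz : P (2 * ((n : ℤ) + 1)) = 0 := by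
        have : ((6 : ℂ) + 2 * (2 * ((n : ℂ) + 1))) * P (2 * ((n : ℤ) + 1)) = 0 := by
          rw [h]; ring
        rcases mul_eq_zero.mp this with h' | h'
        · exact absurd h' hne
        · exact h'
      constructor
      · push_cast
        rw [e2]; exact ih2
      · push_cast
        exact hz
  intro n; exact (key n).2

private lemma aux_odd (c : ℂ) (P : ℤ → ℂ) (h1 : P 1 = 0) (h3 : P 3 = 0)
    (hrec : ∀ k : ℤ, 0 ≤ k →
      ((6 : ℂ) + 2 * (k : ℂ)) * P k = 4 * (k : ℂ) * c * P (k - 2) - 2 * ((k : ℂ) - 3) * P (k - 4)) :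
    ∀ n : ℕ, P (2 * n + 1) = 0 := by
  have key : ∀ n : ℕ, P (2 * n + 1) = 0 ∧ P (2 * n + 3) = 0 := by
    intro n
    induction n with
    | zero => exact ⟨by norm_num [h1], by norm_num [h3]⟩
    | succ n ih =>
      obtain ⟨ih1, ih2⟩ := ih
      have h := hrec (2 * (n + 1) + 3) (by positivity)
      have e2 : (2 * ((n : ℤ) + 1) + 3 - 2) = 2 * n + 3 := by ring
      have e4 : (2 * ((n : ℤ) + 1) + 3 - 4) = 2 * n + 1 := by ring
      push_cast at h
      rw [e2, e4, ih1, ih2] at h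
      have hne : ((6 : ℂ) + 2 * (2 * ((n : ℂ) + 1) + 3)) ≠ 0 := by
        intro hcon
        have h' : ((4 * n + 16 : ℕ) : ℂ) = 0 := by push_cast; linear_combination hcon
        rw [Nat.cast_eq_zero] at h'
        omega
      have hz : P (2 * ((n : ℤ) + 1) + 3) = 0 := by
        have : ((6 : ℂ) + 2 * (2 * ((n : ℂ) + 1) + 3)) * P (2 * ((n : ℤ) + 1) + 3) = 0 := by
          rw [h]; ring
        rcases mul_eq_zero.mp this with h' | h'
        · exact absurd h' hne
        · exact h'
      constructor
      · push_cast
        rw [show (2 * ((n : ℤ) + 1) + 1 : ℤ) = 2 * n + 3 by ring]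
        exact ih2
      · push_cast
        exact hz
  intro n; exact (key n).1

/-- Let `(P_{−1,k})` and `(P_{−3,k})` both satisfy the recursion
`(6+2k)P_k = 4kc·P_{k−2} − 2(k−3)·P_{k−4}` for `k ≥ 0`, with initial values
`P_{−1,−4} = P_{−1,−3} = P_{−1,−2} = 0, P_{−1,−1} = 1` and
`P_{−3,−4} = 0, P_{−3,−3} = 1, P_{−3,−2} = P_{−3,−1} = 0` respectively.  Then
`P_{−1,2n−3} = c·P_{−3,2n−3}` for every `n ≥ 2`, and `P_{−1,2m} = P_{−3,2m} = 0`
for every `m ≥ 0`. -/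
theorem stmt15 (c : ℂ) (P1 P3 : ℤ → ℂ)
    (h14 : P1 (-4) = 0) (h13 : P1 (-3) = 0) (h12 : P1 (-2) = 0) (h11 : P1 (-1) = 1)
    (h34 : P3 (-4) = 0) (h33 : P3 (-3) = 1) (h32 : P3 (-2) = 0) (h31 : P3 (-1) = 0)
    (hrec1 : ∀ k : ℤ, 0 ≤ k →
      ((6 : ℂ) + 2 * (k : ℂ)) * P1 k = 4 * (k : ℂ) * c * P1 (k - 2) - 2 * ((k : ℂ) - 3) * P1 (k - 4))
    (hrec3 : ∀ k : ℤ, 0 ≤ k →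
      ((6 : ℂ) + 2 * (k : ℂ)) * P3 k = 4 * (k : ℂ) * c * P3 (k - 2) - 2 * ((k : ℂ) - 3) * P3 (k - 4)) :
    (∀ n : ℤ, 2 ≤ n → P1 (2 * n - 3) = c * P3 (2 * n - 3)) ∧
      (∀ m : ℤ, 0 ≤ m → P1 (2 * m) = 0 ∧ P3 (2 * m) = 0) := by
  set Q : ℤ → ℂ := fun k => P1 k - c * P3 k with hQ
  have hrecQ : ∀ k : ℤ, 0 ≤ k →
      ((6 : ℂ) + 2 * (k : ℂ)) * Q k = 4 * (k : ℂ) * c * Q (k - 2) - 2 * ((k : ℂ) - 3) * Q (k - 4) := by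
    intro k hk
    simp only [hQ]
    linear_combination hrec1 k hk - c * hrec3 k hk
  have hQ1 : Q 1 = 0 := by
    have h := hrecQ 1 (by norm_num)
    norm_num [hQ, h11, h13, h31, h33] at h ⊢
    linear_combination h
  have hQ3 : Q 3 = 0 := by
    have h := hrecQ 3 (by norm_num)
    norm_num [hQ1] at h
    simp only [hQ] at h ⊢
    linear_combination h
  constructor
  · intro n hn
    obtain ⟨m, hm⟩ : ∃ m : ℕ, n = (m : ℤ) + 2 := ⟨(n - 2).toNat, by omega⟩
    have hz := aux_odd c Q hQ1 hQ3 hrecQ m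
    have e : 2 * n - 3 = 2 * (m : ℤ) + 1 := by omega
    rw [e]
    simp only [hQ] at hz
    linear_combination hz
  · intro m hm
    obtain ⟨k, rfl⟩ : ∃ k : ℕ, m = (k : ℤ) := ⟨m.toNat, by omega⟩
    constructor
    · exact_mod_cast aux_even c P1 h14 h12 hrec1 k
    · exact_mod_cast aux_even c P3 h34 h32 hrec3 k
end

section
/- Define a sequence of polynomials (P_{−3,k})_{k ≥ −4} in ℂ[X] by the initial values P_{−3,−4} = 0, P_{−3,−3} = 1, P_{−3,−2} = 0, P_{−3,−1} = 0 and the recursion (6+2k)P_{−3,k} = 4kX·P_{−3,k−2} − 2(k−3)·P_{−3,k−4} for k ≥ 0. Then for every integer n ≥ 2 the polynomial P = P_{−3,2n−3} satisfies the second order differential equation (X² − 1)·P″ + 4X·P′ − (n+1)(n−2)·P = 0 in ℂ[X], where ′ denotes the formal polynomial derivative. -/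
noncomputable section
open Polynomial

/-- Let `(P_{−3,k})_{k ≥ −4}` be the sequence of polynomials in `ℂ[X]` with initial values
`P_{−3,−4} = 0, P_{−3,−3} = 1, P_{−3,−2} = 0, P_{−3,−1} = 0` and satisfying the recursion
`(6+2k)P_{−3,k} = 4kX·P_{−3,k−2} − 2(k−3)·P_{−3,k−4}` for `k ≥ 0`.  Then for every `n ≥ 2`
the polynomial `P = P_{−3,2n−3}` satisfies `(X² − 1)P″ + 4X·P′ − (n+1)(n−2)·P = 0`. -/
theorem stmt16 (P : ℤ → Polynomial ℂ)
    (h4 : P (-4) = 0) (h3 : P (-3) = 1) (h2 : P (-2) = 0) (h1 : P (-1) = 0)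
    (hrec : ∀ k : ℤ, 0 ≤ k →
      Polynomial.C ((6 : ℂ) + 2 * (k : ℂ)) * P k =
        Polynomial.C (4 * (k : ℂ)) * X * P (k - 2) -
          Polynomial.C (2 * ((k : ℂ) - 3)) * P (k - 4)) :
    ∀ n : ℤ, 2 ≤ n →
      (X ^ 2 - 1) * derivative (derivative (P (2 * n - 3)))
        + 4 * X * derivative (P (2 * n - 3))
        - Polynomial.C (((n : ℂ) + 1) * ((n : ℂ) - 2)) * P (2 * n - 3) = 0 := by
  have key : ∀ n : ℤ, 2 ≤ n →
      (C (n : ℂ) * X * derivative (P (2 * n - 3)) =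
        C ((n : ℂ) - 2) * derivative (P (2 * n - 5))
          + C ((n : ℂ) * ((n : ℂ) - 2)) * P (2 * n - 3)) ∧
      ((X ^ 2 - 1) * derivative (P (2 * n - 3)) =
        C ((n : ℂ) - 2) * (X * P (2 * n - 3) - P (2 * n - 5))) := by
    refine Int.le_induction ?_ ?_
    ·
      have hP1 : P 1 = C (1/2 : ℂ) := by
        have h := hrec 1 (by norm_num)
        norm_num [h1, h3] at h
        have h8 : (C (8:ℂ) : Polynomial ℂ) ≠ 0 := by
          simpa using (Polynomial.C_ne_zero.mpr (by norm_num : (8:ℂ) ≠ 0))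
        apply mul_left_cancel₀ h8
        rw [h, ← C_mul]
        norm_num
      constructor <;>
        · norm_num [show (2*2-3 : ℤ) = 1 by ring, show (2*2-5 : ℤ) = -1 by ring, hP1, h1]
    · intro n hn ih
      obtain ⟨ihA, ihB⟩ := ih
      have hR := hrec (2*n - 1) (by omega)
      rw [show (2*n-1) - 2 = 2*n-3 by ring, show (2*n-1) - 4 = 2*n-5 by ring] at hR
      push_cast at hR
      have hR' := congrArg derivative hR
      simp only [derivative_mul, derivative_sub, derivative_add, derivative_C, derivative_X,
        zero_mul, mul_zero, zero_add, add_zero, mul_one, sub_zero, zero_sub] at hR'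
      rw [show 2*(n+1) - 3 = 2*n-1 by ring, show 2*(n+1) - 5 = 2*n-3 by ring]
      push_cast
      have hne : ((4 : Polynomial ℂ) * (C (n:ℂ) + 1)) ≠ 0 := by
        apply mul_ne_zero
        · norm_num
        · have : (C ((n:ℂ) + 1) : Polynomial ℂ) ≠ 0 :=
            Polynomial.C_ne_zero.mpr (by
              have : (n:ℂ) + 1 = ((n + 1 : ℤ) : ℂ) := by push_cast; ring
              rw [this]
              exact_mod_cast (by omega : (n:ℤ) + 1 ≠ 0))
          simpa [map_add] using this
      simp only [map_add, map_sub, map_mul, map_one, map_ofNat] at hR hR' ihA ihB ⊢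
      constructor
      · apply mul_left_cancel₀ hne
        linear_combination ((C (n:ℂ) + 1) * X) * hR' - ((C (n:ℂ) + 1) * (C (n:ℂ) - 1)) * hR
          + (4 * (C (n:ℂ) + 1) * X) * ihA + (4 * (C (n:ℂ) + 1) * (C (n:ℂ) - 1)) * ihB
      · apply mul_left_cancel₀ hne
        linear_combination (X^2 - 1) * hR' - ((C (n:ℂ) - 1) * X) * hR
          + (4 * (X^2 - 1)) * ihA + (4 * (C (n:ℂ) - 1) * X) * ihB
  intro n hn
  obtain ⟨hA, hB⟩ := key n hn
  have hB' := congrArg derivative hB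
  simp only [derivative_mul, derivative_sub, derivative_add, derivative_C, derivative_X,
    derivative_X_pow, derivative_one, zero_mul, mul_zero, zero_add, add_zero, mul_one,
    sub_zero, zero_sub] at hB'
  simp only [map_add, map_sub, map_mul, map_one, map_ofNat, Nat.cast_ofNat] at hA hB' ⊢
  linear_combination hB' + hA
end
end

section
/- Define a sequence of polynomials (P_{−1,k})_{k ≥ −4} in ℂ[X] by the initial values P_{−1,−4} = P_{−1,−3} = P_{−1,−2} = 0, P_{−1,−1} = 1 and the recursion (6+2k)P_{−1,k} = 4kX·P_{−1,k−2} − 2(k−3)·P_{−1,k−4} for k ≥ 0. Then for every integer n ≥ 2 the polynomial P = P_{−1,2n−3} satisfies the second order differential equation (X⁴ − X²)·P″ + 2X(X² + 1)·P′ + (−X²·n(n−1) − 2)·P = 0 in ℂ[X], where ′ denotes the formal polynomial derivative. -/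
noncomputable section
open Polynomial

/-- The first-order auxiliary expression. -/
def Tf17 (P : ℤ → Polynomial ℂ) (m : ℤ) : Polynomial ℂ :=
  2 * X ^ 2 * (X ^ 2 - 1) * derivative (P (2 * m - 3))
    + (Polynomial.C (2 - 2 * (m : ℂ)) * X ^ 3 + 2 * X) * P (2 * m - 3)
    + Polynomial.C (2 * (m : ℂ) - 4) * (X ^ 2 * P (2 * m - 5))

/-- The ODE expression. -/
def Ef17 (P : ℤ → Polynomial ℂ) (m : ℤ) : Polynomial ℂ :=
  (X ^ 4 - X ^ 2) * derivative (derivative (P (2 * m - 3)))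
    + 2 * X * (X ^ 2 + 1) * derivative (P (2 * m - 3))
    + (-(X ^ 2) * Polynomial.C ((m : ℂ) * ((m : ℂ) - 1)) - 2) * P (2 * m - 3)

lemma step17 (P : ℤ → Polynomial ℂ)
    (hrec : ∀ k : ℤ, 0 ≤ k →
      Polynomial.C ((6 : ℂ) + 2 * (k : ℂ)) * P k =
        Polynomial.C (4 * (k : ℂ)) * X * P (k - 2) -
          Polynomial.C (2 * ((k : ℂ) - 3)) * P (k - 4))
    (m : ℤ) (hm : 4 ≤ m)
    (hT1 : Tf17 P (m - 1) = 0) (hE1 : Ef17 P (m - 1) = 0)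
    (hT2 : Tf17 P (m - 2) = 0) (hE2 : Ef17 P (m - 2) = 0) :
    Tf17 P m = 0 ∧ Ef17 P m = 0 := by
  have hm0 : ((m : ℂ)) ≠ 0 := Int.cast_ne_zero.mpr (by omega)
  have hC : (Polynomial.C (4 * (m : ℂ)) : Polynomial ℂ) ≠ 0 := by
    rw [Ne, Polynomial.C_eq_zero]
    exact mul_ne_zero (by norm_num) hm0
  have r1 := hrec (2 * m - 3) (by omega)
  rw [show 2 * m - 3 - 2 = 2 * m - 5 by ring, show 2 * m - 3 - 4 = 2 * m - 7 by ring] at r1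
  push_cast at r1
  have r2 := hrec (2 * m - 5) (by omega)
  rw [show 2 * m - 5 - 2 = 2 * m - 7 by ring, show 2 * m - 5 - 4 = 2 * m - 9 by ring] at r2
  push_cast at r2
  have rd := congrArg derivative r1
  have rdd := congrArg derivative rd
  simp only [derivative_mul, derivative_sub, derivative_add, derivative_C, derivative_X,
    zero_mul, mul_one, one_mul, zero_add, add_zero, mul_zero] at rd rdd
  simp only [Tf17, Ef17] at hT1 hE1 hT2 hE2
  rw [show 2 * (m - 1) - 3 = 2 * m - 5 by ring, show 2 * (m - 1) - 5 = 2 * m - 7 by ring] at hT1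
  rw [show 2 * (m - 1) - 3 = 2 * m - 5 by ring] at hE1
  rw [show 2 * (m - 2) - 3 = 2 * m - 7 by ring, show 2 * (m - 2) - 5 = 2 * m - 9 by ring] at hT2
  rw [show 2 * (m - 2) - 3 = 2 * m - 7 by ring] at hE2
  push_cast at hT1 hE1 hT2 hE2
  simp only [map_sub, map_add, map_mul, map_one, map_ofNat] at r1 r2 rd rdd hT1 hE1 hT2 hE2
  constructor
  · have key : Polynomial.C (4 * (m : ℂ)) * Tf17 P m = 0 := by
      simp only [Tf17, map_sub, map_add, map_mul, map_one, map_ofNat]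
      linear_combination (2 * X ^ 2 * (X ^ 2 - 1)) * rd
        + ((2 - 2 * Polynomial.C ((m : ℂ))) * X ^ 3 + 2 * X) * r1
        + (4 * (2 * Polynomial.C ((m : ℂ)) - 3) * X) * hT1
        - (4 * (Polynomial.C ((m : ℂ)) - 3)) * hT2
        + (2 * (Polynomial.C ((m : ℂ)) - 3) * X ^ 2) * r2
    exact (mul_eq_zero.mp key).resolve_left hC
  · have key : Polynomial.C (4 * (m : ℂ)) * Ef17 P m = 0 := by
      simp only [Ef17, map_sub, map_add, map_mul, map_one, map_ofNat, map_neg]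
      linear_combination (X ^ 4 - X ^ 2) * rdd
        + (2 * X * (X ^ 2 + 1)) * rd
        + (-(X ^ 2) * Polynomial.C ((m : ℂ)) * (Polynomial.C ((m : ℂ)) - 1) - 2) * r1
        + (4 * (2 * Polynomial.C ((m : ℂ)) - 3) * X) * hE1
        + (4 * (2 * Polynomial.C ((m : ℂ)) - 3)) * hT1
        - (4 * (Polynomial.C ((m : ℂ)) - 3)) * hE2
    exact (mul_eq_zero.mp key).resolve_left hC

/-- Let `(P_{−1,k})_{k ≥ −4}` be the sequence of polynomials in `ℂ[X]` with initial values
`P_{−1,−4} = P_{−1,−3} = P_{−1,−2} = 0, P_{−1,−1} = 1` and satisfying the recursion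
`(6+2k)P_{−1,k} = 4kX·P_{−1,k−2} − 2(k−3)·P_{−1,k−4}` for `k ≥ 0`.  Then for every `n ≥ 2`
the polynomial `P = P_{−1,2n−3}` satisfies
`(X⁴ − X²)P″ + 2X(X² + 1)P′ + (−X²·n(n−1) − 2)·P = 0`. -/
theorem stmt17 (P : ℤ → Polynomial ℂ)
    (h4 : P (-4) = 0) (h3 : P (-3) = 0) (h2 : P (-2) = 0) (h1 : P (-1) = 1)
    (hrec : ∀ k : ℤ, 0 ≤ k →
      Polynomial.C ((6 : ℂ) + 2 * (k : ℂ)) * P k =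
        Polynomial.C (4 * (k : ℂ)) * X * P (k - 2) -
          Polynomial.C (2 * ((k : ℂ) - 3)) * P (k - 4)) :
    ∀ n : ℤ, 2 ≤ n →
      (X ^ 4 - X ^ 2) * derivative (derivative (P (2 * n - 3)))
        + 2 * X * (X ^ 2 + 1) * derivative (P (2 * n - 3))
        + (-(X ^ 2) * Polynomial.C ((n : ℂ) * ((n : ℂ) - 1)) - 2) * P (2 * n - 3) = 0 := by
  -- closed forms for P 1 and P 3
  have e1 := hrec 1 (by norm_num)
  rw [show (1 : ℤ) - 2 = -1 by ring, show (1 : ℤ) - 4 = -3 by ring, h1, h3] at e1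
  push_cast at e1
  have hP1 : P 1 = Polynomial.C (2⁻¹ : ℂ) * X := by
    have h8 : (Polynomial.C (8 : ℂ) : Polynomial ℂ) ≠ 0 := by
      rw [Ne, Polynomial.C_eq_zero]; norm_num
    apply mul_left_cancel₀ h8
    calc Polynomial.C (8:ℂ) * P 1 = Polynomial.C (6 + 2 * 1 : ℂ) * P 1 := by norm_num
      _ = Polynomial.C (4 * 1 : ℂ) * X * 1 - Polynomial.C (2 * (1 - 3) : ℂ) * 0 := e1
      _ = Polynomial.C (8:ℂ) * (Polynomial.C (2⁻¹ : ℂ) * X) := by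
          rw [← mul_assoc, ← Polynomial.C_mul]; norm_num
  have e3 := hrec 3 (by norm_num)
  rw [show (3 : ℤ) - 2 = 1 by ring, show (3 : ℤ) - 4 = -1 by ring, h1, hP1] at e3
  push_cast at e3
  have hP3 : P 3 = Polynomial.C (2⁻¹ : ℂ) * X ^ 2 := by
    have h12 : (Polynomial.C (12 : ℂ) : Polynomial ℂ) ≠ 0 := by
      rw [Ne, Polynomial.C_eq_zero]; norm_num
    apply mul_left_cancel₀ h12
    calc Polynomial.C (12:ℂ) * P 3 = Polynomial.C (6 + 2 * 3 : ℂ) * P 3 := by norm_num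
      _ = Polynomial.C (4 * 3 : ℂ) * X * (Polynomial.C (2⁻¹:ℂ) * X) -
            Polynomial.C (2 * (3 - 3) : ℂ) * 1 := e3
      _ = Polynomial.C (12:ℂ) * (Polynomial.C (2⁻¹ : ℂ) * X ^ 2) := by
          norm_num
          ring
  -- base cases
  have bT2 : Tf17 P 2 = 0 := by
    simp only [Tf17]
    norm_num [hP1, h1, derivative_mul, derivative_C, derivative_X, map_ofNat, map_neg]
    ring
  have bT3 : Tf17 P 3 = 0 := by
    simp only [Tf17]
    norm_num [hP3, hP1, derivative_mul, derivative_C, derivative_X, derivative_X_pow,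
      map_ofNat, map_neg]
    ring
  have bE2 : Ef17 P 2 = 0 := by
    simp only [Ef17]
    norm_num [hP1, derivative_mul, derivative_C, derivative_X, map_ofNat, map_neg]
    ring
  have bE3 : Ef17 P 3 = 0 := by
    simp only [Ef17]
    norm_num [hP3, derivative_mul, derivative_C, derivative_X, derivative_X_pow,
      map_ofNat, map_neg]
    ring
  -- induction
  have main : ∀ k : ℕ, (Tf17 P ((k : ℤ) + 2) = 0 ∧ Ef17 P ((k : ℤ) + 2) = 0) ∧
      (Tf17 P ((k : ℤ) + 3) = 0 ∧ Ef17 P ((k : ℤ) + 3) = 0) := by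
    intro k
    induction k with
    | zero => exact ⟨⟨by simpa using bT2, by simpa using bE2⟩,
        ⟨by simpa using bT3, by simpa using bE3⟩⟩
    | succ k ih =>
      have ea : ((k + 1 : ℕ) : ℤ) + 2 = (k : ℤ) + 3 := by push_cast; ring
      have eb : ((k + 1 : ℕ) : ℤ) + 3 = (k : ℤ) + 4 := by push_cast; ring
      rw [ea, eb]
      refine ⟨ih.2, ?_⟩
      have hstep := step17 P hrec ((k : ℤ) + 4) (by omega)
        (by rw [show (k : ℤ) + 4 - 1 = (k : ℤ) + 3 by ring]; exact ih.2.1)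
        (by rw [show (k : ℤ) + 4 - 1 = (k : ℤ) + 3 by ring]; exact ih.2.2)
        (by rw [show (k : ℤ) + 4 - 2 = (k : ℤ) + 2 by ring]; exact ih.1.1)
        (by rw [show (k : ℤ) + 4 - 2 = (k : ℤ) + 2 by ring]; exact ih.1.2)
      exact hstep
  intro n hn
  have key := (main (n - 2).toNat).1.2
  rw [Int.toNat_of_nonneg (by omega : (0:ℤ) ≤ n - 2), show n - 2 + 2 = n by ring] at key
  simpa only [Ef17] using key

end
end
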